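/- Suppose every system S ⊆ E_n solvable in ℕ with a unique solution has its solution bounded coordinatewise by a computable function of n. Then there is no function γ : ℕ → ℕ of exponential growth (i.e., ∃ c > 1 with γ(n) ≥ cⁿ for all large n) admitting a single-fold Diophantine representation, unless all recursively enumerable subsets of ℕ are computable. -/

import Mathlib

/-- An equation of one of the forms x_k = 1, x_i + x_j = x_k, x_i · x_j = x_k,
coded by the indices of its variables. -/
abbrev DEqn : Type := ℕ ⊕ (ℕ × ℕ × ℕ) ⊕ (ℕ × ℕ × ℕ)

/-- The equation coded by `e` holds under the valuation `v`. -/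
def DEqn.holds (v : ℕ → ℕ) : DEqn → Prop
  | Sum.inl k => v k = 1
  | Sum.inr (Sum.inl (i, j, k)) => v i + v j = v k
  | Sum.inr (Sum.inr (i, j, k)) => v i * v j = v k

/-- The equation `e` belongs to E_n, i.e., all its variable indices are among x_1,...,x_n
(0-indexed: < n). -/
def DEqn.inE (n : ℕ) : DEqn → Prop
  | Sum.inl k => k < n
  | Sum.inr (Sum.inl (i, j, k)) => i < n ∧ j < n ∧ k < n
  | Sum.inr (Sum.inr (i, j, k)) => i < n ∧ j < n ∧ k < n

/-- Extend a tuple x ∈ ℕⁿ to a valuation ℕ → ℕ (zero outside). -/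
def extVal (n : ℕ) (x : Fin n → ℕ) : ℕ → ℕ := fun i => if h : i < n then x ⟨i, h⟩ else 0

/-- The set of solutions in ℕⁿ of the system S. -/
def SolSet (n : ℕ) (S : Set DEqn) : Set (Fin n → ℕ) :=
  {x | ∀ e ∈ S, DEqn.holds (extVal n x) e}

/-- `b` is an admissible bound for n and κ: every system S ⊆ E_n which is solvable in ℕⁿ
and has fewer than κ solutions in ℕⁿ has a solution with all coordinates ≤ b.
(f_κ(n) is the least such b.) -/
def IsBound (κ : Cardinal) (n b : ℕ) : Prop :=
  ∀ S : Set DEqn, (∀ e ∈ S, DEqn.inE n e) → (SolSet n S).Nonempty →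
    Cardinal.mk (SolSet n S) < κ → ∃ x ∈ SolSet n S, ∀ i, x i ≤ b

/-- γ has exponential growth: for some real c > 1, γ(n) ≥ cⁿ for all large n. -/
def ExpGrowth (γ : ℕ → ℕ) : Prop :=
  ∃ c : ℝ, 1 < c ∧ ∃ m : ℕ, ∀ n, m ≤ n → c ^ n ≤ (γ n : ℝ)

/-- γ : ℕ → ℕ has a single-fold Diophantine representation: a polynomial W with
γ(a) = b ↔ ∃! x ∈ ℕᵐ, W(a,b,x) = 0 (at most one witness tuple for each (a,b)). -/
def SingleFoldRepFun (γ : ℕ → ℕ) : Prop :=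
  ∃ m : ℕ, ∃ W : MvPolynomial (Fin (m + 2)) ℤ,
    (∀ a b : ℕ, γ a = b ↔ ∃! x : Fin m → ℕ,
      MvPolynomial.eval (Fin.cons (a : ℤ) (Fin.cons (b : ℤ) (fun i => (x i : ℤ)))) W = 0) ∧
    ∀ a b : ℕ, {x : Fin m → ℕ |
      MvPolynomial.eval (Fin.cons (a : ℤ) (Fin.cons (b : ℤ) (fun i => (x i : ℤ)))) W = 0
        }.Subsingleton

/-- A predicate p on ℕ has a single-fold Diophantine representation. -/
def SingleFoldRepPred (p : ℕ → Prop) : Prop :=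
  ∃ m : ℕ, ∃ W : MvPolynomial (Fin (m + 1)) ℤ,
    ∀ a : ℕ, p a ↔ ∃! x : Fin m → ℕ,
      MvPolynomial.eval (Fin.cons (a : ℤ) (fun i => (x i : ℤ))) W = 0


/-! ### Auxiliary infrastructure -/

/-- Abbreviations for the three kinds of equations. -/
def oneE (k : ℕ) : DEqn := Sum.inl k
def addE (i j k : ℕ) : DEqn := Sum.inr (Sum.inl (i, j, k))
def mulE (i j k : ℕ) : DEqn := Sum.inr (Sum.inr (i, j, k))

@[simp] lemma holds_oneE (v : ℕ → ℕ) (k : ℕ) : DEqn.holds v (oneE k) ↔ v k = 1 := Iff.rfl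
@[simp] lemma holds_addE (v : ℕ → ℕ) (i j k : ℕ) :
    DEqn.holds v (addE i j k) ↔ v i + v j = v k := Iff.rfl
@[simp] lemma holds_mulE (v : ℕ → ℕ) (i j k : ℕ) :
    DEqn.holds v (mulE i j k) ↔ v i * v j = v k := Iff.rfl
@[simp] lemma inE_oneE (n k : ℕ) : DEqn.inE n (oneE k) ↔ k < n := Iff.rfl
@[simp] lemma inE_addE (n i j k : ℕ) : DEqn.inE n (addE i j k) ↔ i < n ∧ j < n ∧ k < n := Iff.rfl
@[simp] lemma inE_mulE (n i j k : ℕ) : DEqn.inE n (mulE i j k) ↔ i < n ∧ j < n ∧ k < n := Iff.rfl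

lemma DEqn.inE.mono {n n' : ℕ} (h : n ≤ n') {q : DEqn} (hq : DEqn.inE n q) : DEqn.inE n' q := by
  rcases q with k | ⟨i, j, k⟩ | ⟨i, j, k⟩ <;> simp [DEqn.inE] at hq ⊢ <;> omega

lemma DEqn.holds_congr {n : ℕ} {q : DEqn} (hq : DEqn.inE n q) {v w : ℕ → ℕ}
    (h : ∀ i < n, v i = w i) : DEqn.holds v q ↔ DEqn.holds w q := by
  rcases q with k | ⟨i, j, k⟩ | ⟨i, j, k⟩ <;>
    simp only [DEqn.inE, DEqn.holds] at hq ⊢ <;>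
    [rw [h k hq]; rw [h i hq.1, h j hq.2.1, h k hq.2.2]; rw [h i hq.1, h j hq.2.1, h k hq.2.2]]

/-- Arithmetic expressions over variables (by absolute index). -/
inductive XExpr : Type
  | atom : ℕ → XExpr
  | add : XExpr → XExpr → XExpr
  | mul : XExpr → XExpr → XExpr

namespace XExpr

def val (v : ℕ → ℕ) : XExpr → ℕ
  | atom i => v i
  | add e f => e.val v + f.val v
  | mul e f => e.val v * f.val v

def size : XExpr → ℕ
  | atom _ => 0
  | add e f => e.size + f.size + 1
  | mul e f => e.size + f.size + 1

/-- Index of the register holding the value of the expression, when compiled starting at `s`. -/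
def out (s : ℕ) : XExpr → ℕ
  | atom i => i
  | add e f => s + e.size + f.size
  | mul e f => s + e.size + f.size

/-- Equations of the compiled expression. -/
def eqns (s : ℕ) : XExpr → List DEqn
  | atom _ => []
  | add e f => addE (e.out s) (f.out (s + e.size)) (s + e.size + f.size) ::
      (e.eqns s ++ f.eqns (s + e.size))
  | mul e f => mulE (e.out s) (f.out (s + e.size)) (s + e.size + f.size) ::
      (e.eqns s ++ f.eqns (s + e.size))

def AtomsLT (s : ℕ) : XExpr → Prop
  | atom i => i < s
  | add e f => AtomsLT s e ∧ AtomsLT s f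
  | mul e f => AtomsLT s e ∧ AtomsLT s f

lemma AtomsLT.mono {s t : ℕ} (h : s ≤ t) : ∀ {e : XExpr}, AtomsLT s e → AtomsLT t e
  | atom i, hi => lt_of_lt_of_le hi h
  | add e f, ⟨he, hf⟩ => ⟨he.mono h, hf.mono h⟩
  | mul e f, ⟨he, hf⟩ => ⟨he.mono h, hf.mono h⟩

lemma out_lt {s : ℕ} : ∀ {e : XExpr}, AtomsLT s e → e.out s < s + e.size
  | atom _, hi => by simpa [out, size, AtomsLT] using hi
  | add e f, _ => by simp [out, size]; omega
  | mul e f, _ => by simp [out, size]; omega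

lemma val_congr {s : ℕ} {v w : ℕ → ℕ} (h : ∀ i < s, v i = w i) :
    ∀ {e : XExpr}, AtomsLT s e → e.val v = e.val w
  | atom i, hi => h i hi
  | add e f, ⟨he, hf⟩ => by simp [val, val_congr h he, val_congr h hf]
  | mul e f, ⟨he, hf⟩ => by simp [val, val_congr h he, val_congr h hf]

lemma sound {v : ℕ → ℕ} : ∀ {e : XExpr} {s : ℕ},
    (∀ q ∈ e.eqns s, DEqn.holds v q) → v (e.out s) = e.val v
  | atom i, s, _ => rfl
  | add e f, s, H => by
      have h1 := sound (e := e) (s := s) fun q hq => H q (by simp [eqns, hq])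
      have h2 := sound (e := f) (s := s + e.size) fun q hq => H q (by simp [eqns, hq])
      have h0 := H _ List.mem_cons_self
      rw [holds_addE] at h0
      show v (s + e.size + f.size) = e.val v + f.val v
      rw [← h0, h1, h2]
  | mul e f, s, H => by
      have h1 := sound (e := e) (s := s) fun q hq => H q (by simp [eqns, hq])
      have h2 := sound (e := f) (s := s + e.size) fun q hq => H q (by simp [eqns, hq])
      have h0 := H _ List.mem_cons_self
      rw [holds_mulE] at h0
      show v (s + e.size + f.size) = e.val v * f.val v
      rw [← h0, h1, h2]

lemma eqns_inE {s : ℕ} : ∀ {e : XExpr}, AtomsLT s e →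
    ∀ q ∈ e.eqns s, DEqn.inE (s + e.size) q
  | atom _, _, q, hq => by simp [eqns] at hq
  | add e f, ⟨he, hf⟩, q, hq => by
      have o1 : e.out s < s + e.size := out_lt he
      have o2 : f.out (s + e.size) < s + e.size + f.size :=
        out_lt (hf.mono (Nat.le_add_right _ _))
      simp only [eqns, List.mem_cons, List.mem_append] at hq
      rcases hq with rfl | hq | hq
      · simp [size]; omega
      · exact (eqns_inE he q hq).mono (by simp [size]; omega)
      · exact (eqns_inE (hf.mono (Nat.le_add_right _ _)) q hq).mono (by simp [size]; omega)
  | mul e f, ⟨he, hf⟩, q, hq => by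
      have o1 : e.out s < s + e.size := out_lt he
      have o2 : f.out (s + e.size) < s + e.size + f.size :=
        out_lt (hf.mono (Nat.le_add_right _ _))
      simp only [eqns, List.mem_cons, List.mem_append] at hq
      rcases hq with rfl | hq | hq
      · simp [size]; omega
      · exact (eqns_inE he q hq).mono (by simp [size]; omega)
      · exact (eqns_inE (hf.mono (Nat.le_add_right _ _)) q hq).mono (by simp [size]; omega)

end XExpr

namespace XExpr

/-- Execute the straight-line program: extend the valuation with register values. -/
def write (v : ℕ → ℕ) (s : ℕ) : XExpr → (ℕ → ℕ)
  | atom _ => v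
  | add e f =>
      let v2 := f.write (e.write v s) (s + e.size)
      Function.update v2 (s + e.size + f.size) (v2 (e.out s) + v2 (f.out (s + e.size)))
  | mul e f =>
      let v2 := f.write (e.write v s) (s + e.size)
      Function.update v2 (s + e.size + f.size) (v2 (e.out s) * v2 (f.out (s + e.size)))

lemma write_frame {v : ℕ → ℕ} : ∀ {e : XExpr} {s j : ℕ}, (j < s ∨ s + e.size ≤ j) →
    e.write v s j = v j
  | atom _, s, j, _ => rfl
  | add e f, s, j, h => by
      have hj : j ≠ s + e.size + f.size := by simp [size] at h; omega
      have hw : (XExpr.add e f).write v s =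
          Function.update (f.write (e.write v s) (s + e.size)) (s + e.size + f.size)
            (f.write (e.write v s) (s + e.size) (e.out s) +
             f.write (e.write v s) (s + e.size) (f.out (s + e.size))) := rfl
      rw [hw, Function.update_of_ne hj,
          write_frame (e := f) (by simp [size] at h; omega),
          write_frame (e := e) (by simp [size] at h; omega)]
  | mul e f, s, j, h => by
      have hj : j ≠ s + e.size + f.size := by simp [size] at h; omega
      have hw : (XExpr.mul e f).write v s =
          Function.update (f.write (e.write v s) (s + e.size)) (s + e.size + f.size)
            (f.write (e.write v s) (s + e.size) (e.out s) *
             f.write (e.write v s) (s + e.size) (f.out (s + e.size))) := rfl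
      rw [hw, Function.update_of_ne hj,
          write_frame (e := f) (by simp [size] at h; omega),
          write_frame (e := e) (by simp [size] at h; omega)]

lemma write_out {v : ℕ → ℕ} : ∀ {e : XExpr} {s : ℕ}, AtomsLT s e →
    e.write v s (e.out s) = e.val v
  | atom _, s, _ => rfl
  | add e f, s, ⟨he, hf⟩ => by
      have hf' : AtomsLT (s + e.size) f := hf.mono (Nat.le_add_right _ _)
      have o1 : e.out s < s + e.size := out_lt he
      have o2 : f.out (s + e.size) < s + e.size + f.size := out_lt hf'
      show Function.update _ _ _ _ = _
      rw [show (XExpr.add e f).out s = s + e.size + f.size from rfl, Function.update_self]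
      have h1 : f.write (e.write v s) (s + e.size) (e.out s) = e.write v s (e.out s) :=
        write_frame (Or.inl o1)
      have h2 : f.write (e.write v s) (s + e.size) (f.out (s + e.size)) = f.val (e.write v s) :=
        write_out hf'
      have h3 : f.val (e.write v s) = f.val v :=
        val_congr (fun i hi => write_frame (Or.inl hi)) hf
      rw [h1, h2, h3, write_out he]; rfl
  | mul e f, s, ⟨he, hf⟩ => by
      have hf' : AtomsLT (s + e.size) f := hf.mono (Nat.le_add_right _ _)
      have o1 : e.out s < s + e.size := out_lt he
      have o2 : f.out (s + e.size) < s + e.size + f.size := out_lt hf'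
      show Function.update _ _ _ _ = _
      rw [show (XExpr.mul e f).out s = s + e.size + f.size from rfl, Function.update_self]
      have h1 : f.write (e.write v s) (s + e.size) (e.out s) = e.write v s (e.out s) :=
        write_frame (Or.inl o1)
      have h2 : f.write (e.write v s) (s + e.size) (f.out (s + e.size)) = f.val (e.write v s) :=
        write_out hf'
      have h3 : f.val (e.write v s) = f.val v :=
        val_congr (fun i hi => write_frame (Or.inl hi)) hf
      rw [h1, h2, h3, write_out he]; rfl

lemma write_holds {v : ℕ → ℕ} : ∀ {e : XExpr} {s : ℕ}, AtomsLT s e →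
    ∀ q ∈ e.eqns s, DEqn.holds (e.write v s) q
  | atom _, s, _, q, hq => by simp [eqns] at hq
  | add e f, s, ⟨he, hf⟩, q, hq => by
      have hf' : AtomsLT (s + e.size) f := hf.mono (Nat.le_add_right _ _)
      have o1 : e.out s < s + e.size := out_lt he
      have o2 : f.out (s + e.size) < s + e.size + f.size := out_lt hf'
      simp only [eqns, List.mem_cons, List.mem_append] at hq
      have hw : (XExpr.add e f).write v s =
          Function.update (f.write (e.write v s) (s + e.size)) (s + e.size + f.size)
            (f.write (e.write v s) (s + e.size) (e.out s) +
             f.write (e.write v s) (s + e.size) (f.out (s + e.size))) := rfl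
      rcases hq with rfl | hq | hq
      · rw [holds_addE, hw, Function.update_self,
          Function.update_of_ne (show e.out s ≠ s + e.size + f.size by omega),
          Function.update_of_ne (show f.out (s + e.size) ≠ s + e.size + f.size by omega)]
      · have hh := write_holds (v := v) he q hq
        have hlt := eqns_inE he q hq
        refine (DEqn.holds_congr hlt fun i hi => ?_).1 hh
        rw [hw, Function.update_of_ne (show i ≠ s + e.size + f.size by omega),
          write_frame (e := f) (Or.inl hi)]
      · have hh := write_holds (v := e.write v s) hf' q hq
        have hlt := eqns_inE hf' q hq
        refine (DEqn.holds_congr hlt fun i hi => ?_).1 hh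
        rw [hw, Function.update_of_ne (show i ≠ s + e.size + f.size by omega)]
  | mul e f, s, ⟨he, hf⟩, q, hq => by
      have hf' : AtomsLT (s + e.size) f := hf.mono (Nat.le_add_right _ _)
      have o1 : e.out s < s + e.size := out_lt he
      have o2 : f.out (s + e.size) < s + e.size + f.size := out_lt hf'
      simp only [eqns, List.mem_cons, List.mem_append] at hq
      have hw : (XExpr.mul e f).write v s =
          Function.update (f.write (e.write v s) (s + e.size)) (s + e.size + f.size)
            (f.write (e.write v s) (s + e.size) (e.out s) *
             f.write (e.write v s) (s + e.size) (f.out (s + e.size))) := rfl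
      rcases hq with rfl | hq | hq
      · rw [holds_mulE, hw, Function.update_self,
          Function.update_of_ne (show e.out s ≠ s + e.size + f.size by omega),
          Function.update_of_ne (show f.out (s + e.size) ≠ s + e.size + f.size by omega)]
      · have hh := write_holds (v := v) he q hq
        have hlt := eqns_inE he q hq
        refine (DEqn.holds_congr hlt fun i hi => ?_).1 hh
        rw [hw, Function.update_of_ne (show i ≠ s + e.size + f.size by omega),
          write_frame (e := f) (Or.inl hi)]
      · have hh := write_holds (v := e.write v s) hf' q hq
        have hlt := eqns_inE hf' q hq
        refine (DEqn.holds_congr hlt fun i hi => ?_).1 hh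
        rw [hw, Function.update_of_ne (show i ≠ s + e.size + f.size by omega)]

lemma unique {v w : ℕ → ℕ} : ∀ {e : XExpr} {s : ℕ}, AtomsLT s e →
    (∀ i < s, v i = w i) →
    (∀ q ∈ e.eqns s, DEqn.holds v q) → (∀ q ∈ e.eqns s, DEqn.holds w q) →
    ∀ j, s ≤ j → j < s + e.size → v j = w j
  | atom _, s, _, _, _, _, j, h1, h2 => by simp [size] at h2; omega
  | add e f, s, ⟨he, hf⟩, hagree, hv, hw, j, h1, h2 => by
      have hf' : AtomsLT (s + e.size) f := hf.mono (Nat.le_add_right _ _)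
      have o1 : e.out s < s + e.size := out_lt he
      have o2 : f.out (s + e.size) < s + e.size + f.size := out_lt hf'
      have hv1 : ∀ q ∈ e.eqns s, DEqn.holds v q := fun q hq => hv q (by simp [eqns, hq])
      have hw1 : ∀ q ∈ e.eqns s, DEqn.holds w q := fun q hq => hw q (by simp [eqns, hq])
      have hv2 : ∀ q ∈ f.eqns (s + e.size), DEqn.holds v q :=
        fun q hq => hv q (by simp [eqns, hq])
      have hw2 : ∀ q ∈ f.eqns (s + e.size), DEqn.holds w q :=
        fun q hq => hw q (by simp [eqns, hq])
      have IH1 : ∀ j, s ≤ j → j < s + e.size → v j = w j :=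
        unique he hagree hv1 hw1
      have agree2 : ∀ i < s + e.size, v i = w i := by
        intro i hi
        rcases lt_or_ge i s with h | h
        · exact hagree i h
        · exact IH1 i h hi
      have IH2 : ∀ j, s + e.size ≤ j → j < s + e.size + f.size → v j = w j :=
        unique hf' agree2 hv2 hw2
      have agree3 : ∀ i < s + e.size + f.size, v i = w i := by
        intro i hi
        rcases lt_or_ge i (s + e.size) with h | h
        · exact agree2 i h
        · exact IH2 i h hi
      simp only [size] at h2
      rcases lt_or_ge j (s + e.size + f.size) with h | h
      · exact agree3 j h
      · have hj : j = s + e.size + f.size := by omega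
        subst hj
        have e0v := hv _ List.mem_cons_self
        have e0w := hw _ List.mem_cons_self
        rw [holds_addE] at e0v e0w
        rw [← e0v, ← e0w, agree3 _ (by omega), agree3 _ (by omega)]
  | mul e f, s, ⟨he, hf⟩, hagree, hv, hw, j, h1, h2 => by
      have hf' : AtomsLT (s + e.size) f := hf.mono (Nat.le_add_right _ _)
      have o1 : e.out s < s + e.size := out_lt he
      have o2 : f.out (s + e.size) < s + e.size + f.size := out_lt hf'
      have hv1 : ∀ q ∈ e.eqns s, DEqn.holds v q := fun q hq => hv q (by simp [eqns, hq])
      have hw1 : ∀ q ∈ e.eqns s, DEqn.holds w q := fun q hq => hw q (by simp [eqns, hq])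
      have hv2 : ∀ q ∈ f.eqns (s + e.size), DEqn.holds v q :=
        fun q hq => hv q (by simp [eqns, hq])
      have hw2 : ∀ q ∈ f.eqns (s + e.size), DEqn.holds w q :=
        fun q hq => hw q (by simp [eqns, hq])
      have IH1 : ∀ j, s ≤ j → j < s + e.size → v j = w j :=
        unique he hagree hv1 hw1
      have agree2 : ∀ i < s + e.size, v i = w i := by
        intro i hi
        rcases lt_or_ge i s with h | h
        · exact hagree i h
        · exact IH1 i h hi
      have IH2 : ∀ j, s + e.size ≤ j → j < s + e.size + f.size → v j = w j :=
        unique hf' agree2 hv2 hw2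
      have agree3 : ∀ i < s + e.size + f.size, v i = w i := by
        intro i hi
        rcases lt_or_ge i (s + e.size) with h | h
        · exact agree2 i h
        · exact IH2 i h hi
      simp only [size] at h2
      rcases lt_or_ge j (s + e.size + f.size) with h | h
      · exact agree3 j h
      · have hj : j = s + e.size + f.size := by omega
        subst hj
        have e0v := hv _ List.mem_cons_self
        have e0w := hw _ List.mem_cons_self
        rw [holds_mulE] at e0v e0w
        rw [← e0v, ← e0w, agree3 _ (by omega), agree3 _ (by omega)]

end XExpr

open XExpr


/-- Expression with value `k`, using the zero-atom `m` and the one-atom `m+1`. -/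
def natE (m : ℕ) : ℕ → XExpr
  | 0 => XExpr.atom m
  | k+1 => XExpr.add (natE m k) (XExpr.atom (m+1))

@[simp] lemma AtomsLT_atom {s i : ℕ} : AtomsLT s (XExpr.atom i) ↔ i < s := Iff.rfl
@[simp] lemma AtomsLT_add {s : ℕ} {e f : XExpr} :
    AtomsLT s (XExpr.add e f) ↔ AtomsLT s e ∧ AtomsLT s f := Iff.rfl
@[simp] lemma AtomsLT_mul {s : ℕ} {e f : XExpr} :
    AtomsLT s (XExpr.mul e f) ↔ AtomsLT s e ∧ AtomsLT s f := Iff.rfl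

lemma natE_atoms (m k : ℕ) : AtomsLT (m + 3) (natE m k) := by
  induction k with
  | zero => show m < m + 3; omega
  | succ k ih => exact ⟨ih, show m + 1 < m + 3 by omega⟩

lemma natE_val (m k : ℕ) {v : ℕ → ℕ} (hz : v m = 0) (ho : v (m+1) = 1) :
    (natE m k).val v = k := by
  induction k with
  | zero => simpa [natE, XExpr.val] using hz
  | succ k ih => simp [natE, XExpr.val, ih, ho]

/-- Atom index for the variable `i` of the polynomial: variable 0 is the parameter (index m+2),
variable `j+1` is the input `j` (index j). -/
def xIdx (m : ℕ) (i : Fin (m+1)) : ℕ := Fin.cases (m+2) (fun j : Fin m => (j : ℕ)) i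

lemma xIdx_lt (m : ℕ) (i : Fin (m+1)) : xIdx m i < m + 3 := by
  induction i using Fin.cases with
  | zero => simp [xIdx]
  | succ j => simp [xIdx]; omega

lemma cons_xIdx (m : ℕ) (v : ℕ → ℕ) (i : Fin (m+1)) :
    (Fin.cons ((v (m+2) : ℤ)) (fun j : Fin m => (v j : ℤ)) : Fin (m+1) → ℤ) i
      = (v (xIdx m i) : ℤ) := by
  induction i using Fin.cases with
  | zero => simp [xIdx]
  | succ j => simp [xIdx]

/-- Every integer polynomial is a difference of two expressions. -/
lemma poly_decomp (m : ℕ) (W : MvPolynomial (Fin (m+1)) ℤ) :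
    ∃ E1 E2 : XExpr, AtomsLT (m+3) E1 ∧ AtomsLT (m+3) E2 ∧
      ∀ v : ℕ → ℕ, v m = 0 → v (m+1) = 1 →
        MvPolynomial.eval (Fin.cons ((v (m+2) : ℤ)) (fun i : Fin m => (v i : ℤ))) W
          = (E1.val v : ℤ) - (E2.val v : ℤ) := by
  induction W using MvPolynomial.induction_on with
  | C c =>
      refine ⟨natE m c.toNat, natE m (-c).toNat, natE_atoms m _, natE_atoms m _, ?_⟩
      intro v hz ho
      rw [MvPolynomial.eval_C, natE_val m _ hz ho, natE_val m _ hz ho]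
      omega
  | add p q hp hq =>
      obtain ⟨A1, A2, hA1, hA2, hA⟩ := hp
      obtain ⟨B1, B2, hB1, hB2, hB⟩ := hq
      refine ⟨XExpr.add A1 B1, XExpr.add A2 B2, ⟨hA1, hB1⟩, ⟨hA2, hB2⟩, ?_⟩
      intro v hz ho
      rw [map_add, hA v hz ho, hB v hz ho]
      simp [XExpr.val]
      push_cast
      ring
  | mul_X p i hp =>
      obtain ⟨A1, A2, hA1, hA2, hA⟩ := hp
      refine ⟨XExpr.mul A1 (XExpr.atom (xIdx m i)), XExpr.mul A2 (XExpr.atom (xIdx m i)),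
        ⟨hA1, xIdx_lt m i⟩, ⟨hA2, xIdx_lt m i⟩, ?_⟩
      intro v hz ho
      rw [map_mul, hA v hz ho, MvPolynomial.eval_X, cons_xIdx]
      simp [XExpr.val]
      push_cast
      ring

section SysSec

variable (m : ℕ) (E1 E2 : XExpr)

/-- Index after all the registers: start of the counting chain. -/
def n0v : ℕ := m + 3 + E1.size + E2.size

/-- Total number of variables. -/
def sysN (a : ℕ) : ℕ := n0v m E1 E2 + a + 1

/-- The full system: one, zero, chain producing the parameter a, compiled expressions,
and the equality of the two sides. -/
def Sys (a : ℕ) : List DEqn :=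
  oneE (m+1) :: addE m m m ::
  addE (E1.out (m+3)) m (E2.out (m+3+E1.size)) ::
  addE (n0v m E1 E2 + a) m (m+2) ::
  addE (n0v m E1 E2) (n0v m E1 E2) (n0v m E1 E2) ::
  (((List.range a).map fun j => addE (n0v m E1 E2 + j) (m+1) (n0v m E1 E2 + j + 1)) ++
    E1.eqns (m+3) ++ E2.eqns (m+3+E1.size))

variable {m E1 E2}

lemma sys_inE (hE1 : AtomsLT (m+3) E1) (hE2 : AtomsLT (m+3) E2) (a : ℕ) :
    ∀ q ∈ Sys m E1 E2 a, DEqn.inE (sysN m E1 E2 a) q := by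
  intro q hq
  have hE2' : AtomsLT (m+3+E1.size) E2 := hE2.mono (by omega)
  have o1 : E1.out (m+3) < m+3+E1.size := out_lt hE1
  have o2 : E2.out (m+3+E1.size) < m+3+E1.size+E2.size := out_lt hE2'
  simp only [Sys, List.mem_cons, List.mem_append, List.mem_map, List.mem_range] at hq
  rcases hq with rfl | rfl | rfl | rfl | rfl | (⟨j, hj, rfl⟩ | hq) | hq
  · simp [sysN, n0v]; omega
  · simp [sysN, n0v]; omega
  · simp [sysN, n0v]; omega
  · simp [sysN, n0v]; omega
  · simp [sysN, n0v]
  · simp [sysN, n0v]; omega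
  · exact (eqns_inE hE1 q hq).mono (by simp [sysN, n0v]; omega)
  · exact (eqns_inE hE2' q hq).mono (by simp [sysN, n0v]; omega)

/-- The base facts forced by the system on any valuation satisfying it. -/
lemma sys_forced {a : ℕ} {v : ℕ → ℕ} (hv : ∀ q ∈ Sys m E1 E2 a, DEqn.holds v q) :
    v m = 0 ∧ v (m+1) = 1 ∧ v (m+2) = a ∧
      v (E1.out (m+3)) = v (E2.out (m+3+E1.size)) ∧ ∀ j ≤ a, v (n0v m E1 E2 + j) = j := by
  have h1 : v (m+1) = 1 := hv (oneE (m+1)) (by simp [Sys])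
  have h0 : v m = 0 := by
    have := hv (addE m m m) (by simp [Sys]); simp at this; omega
  have hchain : ∀ j ≤ a, v (n0v m E1 E2 + j) = j := by
    intro j hj
    induction j with
    | zero =>
        have := hv (addE (n0v m E1 E2) (n0v m E1 E2) (n0v m E1 E2)) (by simp [Sys])
        simp at this
        show v (n0v m E1 E2 + 0) = 0
        rw [Nat.add_zero]; omega
    | succ j ih =>
        have hmem : addE (n0v m E1 E2 + j) (m+1) (n0v m E1 E2 + j + 1) ∈ Sys m E1 E2 a := by
          simp only [Sys, List.mem_cons, List.mem_append, List.mem_map, List.mem_range]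
          exact Or.inr (Or.inr (Or.inr (Or.inr (Or.inr (Or.inl (Or.inl ⟨j, by omega, rfl⟩))))))
        have := hv _ hmem
        simp at this
        rw [ih (by omega), h1] at this
        show v (n0v m E1 E2 + (j + 1)) = j + 1
        rw [show n0v m E1 E2 + (j + 1) = n0v m E1 E2 + j + 1 from rfl]
        omega
  have hpar : v (m+2) = a := by
    have := hv (addE (n0v m E1 E2 + a) m (m+2)) (by simp [Sys])
    simp at this
    rw [hchain a le_rfl, h0] at this
    omega
  have heq : v (E1.out (m+3)) = v (E2.out (m+3+E1.size)) := by
    have := hv (addE (E1.out (m+3)) m (E2.out (m+3+E1.size))) (by simp [Sys])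
    simp at this
    rw [h0] at this
    omega
  exact ⟨h0, h1, hpar, heq, hchain⟩

end SysSec

open XExpr

section Claims

variable {m : ℕ} {E1 E2 : XExpr} {W : MvPolynomial (Fin (m+1)) ℤ}

/-- The canonical base valuation. -/
def vbase (m : ℕ) (E1 E2 : XExpr) (a : ℕ) (x : Fin m → ℕ) : ℕ → ℕ := fun i =>
  if h : i < m then x ⟨i, h⟩
  else if i = m then 0
  else if i = m+1 then 1
  else if i = m+2 then a
  else if i < n0v m E1 E2 then 0
  else i - n0v m E1 E2

lemma n0v_ge : m + 3 ≤ n0v m E1 E2 := by simp [n0v]; omega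

lemma vb_lt {a x} {i : ℕ} (h : i < m) : vbase m E1 E2 a x i = x ⟨i, h⟩ := by
  simp [vbase, h]

lemma vb_m {a x} : vbase m E1 E2 a x m = 0 := by simp [vbase]

lemma vb_m1 {a x} : vbase m E1 E2 a x (m+1) = 1 := by
  have h1 : ¬ (m+1 < m) := by omega
  have h2 : ¬ (m+1 = m) := by omega
  simp [vbase, h1, h2]

lemma vb_m2 {a x} : vbase m E1 E2 a x (m+2) = a := by
  have h1 : ¬ (m+2 < m) := by omega
  have h2 : ¬ (m+2 = m) := by omega
  have h3 : ¬ (m+2 = m+1) := by omega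
  simp [vbase, h1, h2, h3]

lemma vb_chain {a x} {i : ℕ} (h : n0v m E1 E2 ≤ i) :
    vbase m E1 E2 a x i = i - n0v m E1 E2 := by
  have hge := n0v_ge (m := m) (E1 := E1) (E2 := E2)
  have h1 : ¬ (i < m) := by omega
  have h2 : ¬ (i = m) := by omega
  have h3 : ¬ (i = m+1) := by omega
  have h4 : ¬ (i = m+2) := by omega
  have h5 : ¬ (i < n0v m E1 E2) := by omega
  simp [vbase, h1, h2, h3, h4, h5]

/-- Hypothesis packaging the decomposition property. -/
def DecompOK (m : ℕ) (E1 E2 : XExpr) (W : MvPolynomial (Fin (m+1)) ℤ) : Prop :=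
  ∀ v : ℕ → ℕ, v m = 0 → v (m+1) = 1 →
    MvPolynomial.eval (Fin.cons ((v (m+2) : ℤ)) (fun i : Fin m => (v i : ℤ))) W
      = (E1.val v : ℤ) - (E2.val v : ℤ)

/-- Completeness: a solution of the polynomial equation extends to a system solution. -/
lemma sys_complete (hE1 : AtomsLT (m+3) E1) (hE2 : AtomsLT (m+3) E2)
    (hdec : DecompOK m E1 E2 W) (a : ℕ) (x : Fin m → ℕ)
    (hx : MvPolynomial.eval (Fin.cons ((a : ℤ)) (fun i : Fin m => (x i : ℤ))) W = 0) :
    ∃ X ∈ SolSet (sysN m E1 E2 a) {q | q ∈ Sys m E1 E2 a},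
      ∀ i : ℕ, ∀ h : i < m, extVal (sysN m E1 E2 a) X i = x ⟨i, h⟩ := by
  have hE2' : AtomsLT (m+3+E1.size) E2 := hE2.mono (by omega)
  have o1 : E1.out (m+3) < m+3+E1.size := out_lt hE1
  have o2 : E2.out (m+3+E1.size) < m+3+E1.size+E2.size := out_lt hE2'
  set vb := vbase m E1 E2 a x with hvb
  set w1 := E1.write vb (m+3) with hw1
  set cv := E2.write w1 (m+3+E1.size) with hcv
  have frame1 : ∀ i : ℕ, i < m+3 ∨ m+3+E1.size ≤ i → w1 i = vb i :=
    fun i hi => write_frame hi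
  have frame2 : ∀ i : ℕ, i < m+3+E1.size ∨ n0v m E1 E2 ≤ i → cv i = w1 i := by
    intro i hi
    exact write_frame (by simpa [n0v] using hi)
  have cv_low : ∀ i < m+3, cv i = vb i := fun i hi => by
    rw [frame2 i (Or.inl (by omega)), frame1 i (Or.inl hi)]
  have cv_high : ∀ i : ℕ, n0v m E1 E2 ≤ i → cv i = vb i := fun i hi => by
    rw [frame2 i (Or.inr hi), frame1 i (Or.inr (by have := n0v_ge (m := m) (E1 := E1) (E2 := E2); simp [n0v] at hi ⊢; omega))]
  have val1 : cv (E1.out (m+3)) = E1.val vb := by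
    rw [frame2 _ (Or.inl o1), hw1, write_out hE1]
  have val2 : cv (E2.out (m+3+E1.size)) = E2.val vb := by
    rw [hcv, write_out hE2']
    exact val_congr (fun i hi => frame1 i (Or.inl hi)) hE2
  have hvals : E1.val vb = E2.val vb := by
    have hd := hdec vb vb_m vb_m1
    have hcons : (Fin.cons ((vb (m+2) : ℤ)) (fun i : Fin m => (vb i : ℤ)) : Fin (m+1) → ℤ)
        = Fin.cons ((a : ℤ)) (fun i : Fin m => (x i : ℤ)) := by
      refine funext fun i => ?_
      induction i using Fin.cases with
      | zero => simp [hvb, vb_m2]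
      | succ j => simp [hvb, vb_lt j.isLt]
    rw [hcons, hx] at hd
    have := hd.symm
    omega
  have hold_cv : ∀ q ∈ Sys m E1 E2 a, DEqn.holds cv q := by
    intro q hq
    have hge := n0v_ge (m := m) (E1 := E1) (E2 := E2)
    simp only [Sys, List.mem_cons, List.mem_append, List.mem_map, List.mem_range] at hq
    rcases hq with rfl | rfl | rfl | rfl | rfl | (⟨j, hj, rfl⟩ | hq) | hq
    · rw [holds_oneE, cv_low _ (by omega), hvb, vb_m1]
    · rw [holds_addE, cv_low _ (by omega), hvb, vb_m]
    · rw [holds_addE, cv_low m (by omega), val1, val2, hvals, hvb, vb_m]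
      omega
    · rw [holds_addE, cv_low m (by omega), cv_low (m+2) (by omega),
        cv_high _ (by omega), hvb, vb_m, vb_m2, vb_chain (by omega)]
      omega
    · rw [holds_addE, cv_high _ le_rfl, hvb, vb_chain le_rfl]
      omega
    · rw [holds_addE, cv_high (n0v m E1 E2 + j) (by omega),
        cv_high (n0v m E1 E2 + j + 1) (by omega), cv_low (m+1) (by omega), hvb, vb_m1,
        vb_chain (by omega), vb_chain (by omega)]
      omega
    · have hh := write_holds (v := vb) hE1 q hq
      have hlt := eqns_inE hE1 q hq
      refine (DEqn.holds_congr hlt fun i hi => ?_).1 hh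
      exact (frame2 i (Or.inl hi)).symm
    · exact write_holds (v := w1) hE2' q hq
  have hlt_m : ∀ i : ℕ, i < m → i < sysN m E1 E2 a := by
    intro i hi; simp [sysN, n0v]; omega
  refine ⟨fun i => cv i, ?_, ?_⟩
  · intro q hq
    refine (DEqn.holds_congr (sys_inE hE1 hE2 a q hq) fun i hi => ?_).1 (hold_cv q hq)
    simp [extVal, hi]
  · intro i hi
    simp only [extVal, dif_pos (hlt_m i hi)]
    exact (cv_low i (by omega)).trans (vb_lt hi)

/-- Soundness: the input part of a system solution solves the polynomial equation. -/
lemma sys_sound (hdec : DecompOK m E1 E2 W) (a : ℕ) {X : Fin (sysN m E1 E2 a) → ℕ}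
    (hX : X ∈ SolSet (sysN m E1 E2 a) {q | q ∈ Sys m E1 E2 a}) :
    MvPolynomial.eval
      (Fin.cons ((a : ℤ)) (fun i : Fin m => ((extVal (sysN m E1 E2 a) X i : ℕ) : ℤ))) W = 0 := by
  set v := extVal (sysN m E1 E2 a) X with hv
  have hsat : ∀ q ∈ Sys m E1 E2 a, DEqn.holds v q := fun q hq => hX q hq
  obtain ⟨h0, h1, hpar, heq, -⟩ := sys_forced hsat
  have hs1 : v (E1.out (m+3)) = E1.val v := by
    refine sound (s := m+3) fun q hq => hsat q ?_
    simp only [Sys, List.mem_cons, List.mem_append]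
    tauto
  have hs2 : v (E2.out (m+3+E1.size)) = E2.val v := by
    refine sound (s := m+3+E1.size) fun q hq => hsat q ?_
    simp only [Sys, List.mem_cons, List.mem_append]
    tauto
  have hd := hdec v h0 h1
  rw [hpar] at hd
  rw [hs1, hs2] at heq
  rw [hd, heq, sub_self]

/-- Uniqueness: a system solution is determined by its input part. -/
lemma sys_unique (hE1 : AtomsLT (m+3) E1) (hE2 : AtomsLT (m+3) E2) (a : ℕ)
    {X Y : Fin (sysN m E1 E2 a) → ℕ}
    (hX : X ∈ SolSet (sysN m E1 E2 a) {q | q ∈ Sys m E1 E2 a})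
    (hY : Y ∈ SolSet (sysN m E1 E2 a) {q | q ∈ Sys m E1 E2 a})
    (hagree : ∀ i < m, extVal (sysN m E1 E2 a) X i = extVal (sysN m E1 E2 a) Y i) :
    X = Y := by
  have hE2' : AtomsLT (m+3+E1.size) E2 := hE2.mono (by omega)
  have hge := n0v_ge (m := m) (E1 := E1) (E2 := E2)
  set v := extVal (sysN m E1 E2 a) X with hv
  set w := extVal (sysN m E1 E2 a) Y with hw
  have hsatv : ∀ q ∈ Sys m E1 E2 a, DEqn.holds v q := fun q hq => hX q hq
  have hsatw : ∀ q ∈ Sys m E1 E2 a, DEqn.holds w q := fun q hq => hY q hq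
  obtain ⟨h0v, h1v, hparv, -, hchv⟩ := sys_forced hsatv
  obtain ⟨h0w, h1w, hparw, -, hchw⟩ := sys_forced hsatw
  have hv1 : ∀ q ∈ E1.eqns (m+3), DEqn.holds v q := fun q hq => hsatv q (by
    simp only [Sys, List.mem_cons, List.mem_append]; tauto)
  have hw1 : ∀ q ∈ E1.eqns (m+3), DEqn.holds w q := fun q hq => hsatw q (by
    simp only [Sys, List.mem_cons, List.mem_append]; tauto)
  have hv2 : ∀ q ∈ E2.eqns (m+3+E1.size), DEqn.holds v q := fun q hq => hsatv q (by
    simp only [Sys, List.mem_cons, List.mem_append]; tauto)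
  have hw2 : ∀ q ∈ E2.eqns (m+3+E1.size), DEqn.holds w q := fun q hq => hsatw q (by
    simp only [Sys, List.mem_cons, List.mem_append]; tauto)
  have agree_low : ∀ i < m + 3, v i = w i := by
    intro i hi
    rcases Nat.lt_or_ge i m with h | h
    · exact hagree i h
    · have : i = m ∨ i = m+1 ∨ i = m+2 := by omega
      rcases this with rfl | rfl | rfl
      · rw [h0v, h0w]
      · rw [h1v, h1w]
      · rw [hparv, hparw]
  have agree_reg1 : ∀ j, m+3 ≤ j → j < m+3+E1.size → v j = w j :=
    unique hE1 agree_low hv1 hw1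
  have agree_s2 : ∀ i < m+3+E1.size, v i = w i := by
    intro i hi
    rcases Nat.lt_or_ge i (m+3) with h | h
    · exact agree_low i h
    · exact agree_reg1 i h hi
  have agree_reg2 : ∀ j, m+3+E1.size ≤ j → j < m+3+E1.size+E2.size → v j = w j :=
    unique hE2' agree_s2 hv2 hw2
  have agree_all : ∀ i < sysN m E1 E2 a, v i = w i := by
    intro i hi
    rcases Nat.lt_or_ge i (m+3+E1.size) with h | h
    · exact agree_s2 i h
    · rcases Nat.lt_or_ge i (n0v m E1 E2) with h' | h'
      · exact agree_reg2 i h (by simpa [n0v] using h')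
      · have hj : i = n0v m E1 E2 + (i - n0v m E1 E2) := by omega
        have hle : i - n0v m E1 E2 ≤ a := by simp [sysN] at hi; omega
        rw [hj, hchv _ hle, hchw _ hle]
  funext i
  have h1 : X i = v i := by simp [hv, extVal, i.isLt]
  have h2 : Y i = w i := by simp [hw, extVal, i.isLt]
  rw [h1, h2, agree_all i i.isLt]

/-- Key: under the bound hypothesis, the unique solution of a single-fold equation
is bounded by `B (sysN a)`. -/
lemma key_bound {B : ℕ → ℕ}
    (hB : ∀ n : ℕ, ∀ S : Set DEqn, (∀ e ∈ S, DEqn.inE n e) →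
      (∃! x : Fin n → ℕ, x ∈ SolSet n S) → ∀ x ∈ SolSet n S, ∀ i, x i ≤ B n)
    (hE1 : AtomsLT (m+3) E1) (hE2 : AtomsLT (m+3) E2) (hdec : DecompOK m E1 E2 W) (a : ℕ)
    (huniq : ∃! x : Fin m → ℕ,
      MvPolynomial.eval (Fin.cons ((a : ℤ)) (fun i : Fin m => (x i : ℤ))) W = 0) :
    ∀ x : Fin m → ℕ,
      MvPolynomial.eval (Fin.cons ((a : ℤ)) (fun i : Fin m => (x i : ℤ))) W = 0 →
      ∀ i, x i ≤ B (sysN m E1 E2 a) := by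
  intro x hx i
  obtain ⟨X, hX, hXx⟩ := sys_complete hE1 hE2 hdec a x hx
  have hEx : ∃! X' : Fin (sysN m E1 E2 a) → ℕ,
      X' ∈ SolSet (sysN m E1 E2 a) {q | q ∈ Sys m E1 E2 a} := by
    refine ⟨X, hX, fun Y hY => ?_⟩
    have hYx : (fun j : Fin m => extVal (sysN m E1 E2 a) Y j) = x :=
      huniq.unique (sys_sound hdec a hY) hx
    refine sys_unique hE1 hE2 a hY hX fun j hj => ?_
    have hcj := congrFun hYx ⟨j, hj⟩
    simp only at hcj
    rw [hcj, hXx j hj]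
  have hbd := hB _ _ (sys_inE hE1 hE2 a) hEx X hX
  have hin : (i : ℕ) < sysN m E1 E2 a := by
    have := i.isLt; simp [sysN, n0v]; omega
  have h := hXx (i : ℕ) i.isLt
  simp only [extVal, dif_pos hin] at h
  have hxi : x i = X ⟨(i : ℕ), hin⟩ := by
    rw [← h]
  rw [hxi]
  exact hbd _

end Claims

open XExpr

/-! ### Tuple encoding -/

lemma pair_mono {a b a' b' : ℕ} (ha : a ≤ a') (hb : b ≤ b') :
    Nat.pair a b ≤ Nat.pair a' b' := by
  unfold Nat.pair
  split_ifs with h1 h2 h2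
  · nlinarith [Nat.mul_le_mul hb hb]
  · have hb' : b ≤ a' := le_trans hb (le_of_not_gt h2)
    nlinarith [Nat.mul_le_mul hb' hb']
  · have hab : a + 1 ≤ b' := by omega
    nlinarith [Nat.mul_le_mul hab hab]
  · nlinarith [Nat.mul_le_mul ha ha]

def decTup : (m : ℕ) → ℕ → Fin m → ℕ
  | 0, _ => fun i => i.elim0
  | m+1, e => Fin.cons e.unpair.1 (decTup m e.unpair.2)

def encTup : (m : ℕ) → (Fin m → ℕ) → ℕ
  | 0, _ => 0
  | m+1, x => Nat.pair (x 0) (encTup m (fun i => x i.succ))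

def GB : (m : ℕ) → ℕ → ℕ
  | 0, _ => 0
  | m+1, b => Nat.pair b (GB m b)

lemma decTup_encTup : ∀ (m : ℕ) (x : Fin m → ℕ), decTup m (encTup m x) = x
  | 0, x => funext fun i => i.elim0
  | m+1, x => by
      funext i
      induction i using Fin.cases with
      | zero => simp [decTup, encTup]
      | succ j => simp [decTup, encTup, decTup_encTup m]

lemma encTup_le : ∀ (m : ℕ) (x : Fin m → ℕ) (b : ℕ), (∀ i, x i ≤ b) →
    encTup m x ≤ GB m b
  | 0, x, b, _ => le_rfl
  | m+1, x, b, h => by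
      simpa [encTup, GB] using pair_mono (h 0) (encTup_le m (fun i => x i.succ) b fun i => h _)

def teq : (m : ℕ) → ℕ → ℕ → Bool
  | 0, _, _ => true
  | m+1, e1, e2 => (e1.unpair.1 == e2.unpair.1) && teq m e1.unpair.2 e2.unpair.2

lemma teq_iff : ∀ (m : ℕ) (e1 e2 : ℕ), teq m e1 e2 = true ↔ decTup m e1 = decTup m e2
  | 0, e1, e2 => by
      simp only [teq, decTup, true_iff]
  | m+1, e1, e2 => by
      simp [teq, decTup, Fin.cons_inj, teq_iff m]

/-! ### Computability -/

lemma computable_decTup : ∀ (m : ℕ) (i : Fin m), Computable fun e => decTup m e i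
  | 0, i => i.elim0
  | m+1, i => by
      induction i using Fin.cases with
      | zero =>
          exact (Computable.fst.comp Computable.unpair).of_eq fun e => by simp [decTup]
      | succ j =>
          exact ((computable_decTup m j).comp
            (Computable.snd.comp Computable.unpair)).of_eq fun e => by simp [decTup]

lemma computable_GB (m : ℕ) : Computable (GB m) := by
  induction m with
  | zero => exact Computable.const 0
  | succ m ih =>
      exact (Primrec₂.natPair.to_comp.comp Computable.id ih).of_eq fun b => by simp [GB]

lemma computable_teq (m : ℕ) : Computable₂ (teq m) := by
  induction m with
  | zero => exact Computable.const true
  | succ m ih =>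
      have h1 : Computable fun p : ℕ × ℕ => (p.1.unpair.1 == p.2.unpair.1) :=
        Primrec.beq.to_comp.comp
          (Computable.fst.comp (Computable.unpair.comp Computable.fst))
          (Computable.fst.comp (Computable.unpair.comp Computable.snd))
      have h2 : Computable fun p : ℕ × ℕ => teq m p.1.unpair.2 p.2.unpair.2 :=
        ih.comp (Computable.snd.comp (Computable.unpair.comp Computable.fst))
          (Computable.snd.comp (Computable.unpair.comp Computable.snd))
      exact (Primrec.and.to_comp.comp h1 h2).of_eq fun p => by simp [teq]

section ValComp

variable {m : ℕ} {E1 E2 : XExpr}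

lemma computable_val (E : XExpr) (hE : AtomsLT (m+3) E) :
    Computable₂ fun a e : ℕ => XExpr.val (vbase m E1 E2 a (decTup m e)) E := by
  induction E with
  | atom i =>
      have hi : i < m + 3 := hE
      rcases Nat.lt_or_ge i m with h | h
      · exact ((computable_decTup m ⟨i, h⟩).comp Computable.snd).of_eq fun p => by
          simp [XExpr.val, vb_lt h]
      · have : i = m ∨ i = m + 1 ∨ i = m + 2 := by omega
        rcases this with rfl | rfl | rfl
        · exact (Computable.const 0).of_eq fun p => by simp [XExpr.val, vb_m]
        · exact (Computable.const 1).of_eq fun p => by simp [XExpr.val, vb_m1]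
        · exact Computable.fst.of_eq fun p => by simp [XExpr.val, vb_m2]
  | add e f ihe ihf =>
      exact (Primrec.nat_add.to_comp.comp (ihe hE.1) (ihf hE.2)).of_eq fun p => by
        simp [XExpr.val]
  | mul e f ihe ihf =>
      exact (Primrec.nat_mul.to_comp.comp (ihe hE.1) (ihf hE.2)).of_eq fun p => by
        simp [XExpr.val]

/-- Zero-test of the polynomial in terms of the two expressions. -/
lemma decomp_zero_iff {W : MvPolynomial (Fin (m+1)) ℤ} (hdec : DecompOK m E1 E2 W)
    (a : ℕ) (x : Fin m → ℕ) :
    MvPolynomial.eval (Fin.cons ((a : ℤ)) (fun i : Fin m => (x i : ℤ))) W = 0 ↔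
      XExpr.val (vbase m E1 E2 a x) E1 = XExpr.val (vbase m E1 E2 a x) E2 := by
  have hd := hdec (vbase m E1 E2 a x) vb_m vb_m1
  have hcons : (Fin.cons ((vbase m E1 E2 a x (m+2) : ℤ))
      (fun i : Fin m => (vbase m E1 E2 a x i : ℤ)) : Fin (m+1) → ℤ)
      = Fin.cons ((a : ℤ)) (fun i : Fin m => (x i : ℤ)) := by
    refine funext fun i => ?_
    induction i using Fin.cases with
    | zero => simp [vb_m2]
    | succ j => simp [vb_lt j.isLt]
  rw [hcons] at hd
  rw [hd]
  constructor
  · intro h; omega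
  · intro h; rw [h, sub_self]

end ValComp

/-! ### Bounded search and r.e. predicates -/

def bany (f : ℕ → ℕ → Bool) (a k : ℕ) : Bool :=
  Nat.rec (f a 0) (fun j ih => ih || f a (j+1)) k

lemma bany_iff (f : ℕ → ℕ → Bool) (a k : ℕ) :
    bany f a k = true ↔ ∃ e ≤ k, f a e = true := by
  induction k with
  | zero =>
      simp only [bany]
      constructor
      · intro h; exact ⟨0, le_rfl, h⟩
      · rintro ⟨e, he, h⟩
        have : e = 0 := by omega
        subst this; exact h
  | succ k ih =>
      simp only [bany] at ih ⊢
      rw [Bool.or_eq_true, ih]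
      constructor
      · rintro (⟨e, he, h⟩ | h)
        · exact ⟨e, by omega, h⟩
        · exact ⟨k+1, le_rfl, h⟩
      · rintro ⟨e, he, h⟩
        rcases Nat.lt_or_ge e (k+1) with h' | h'
        · exact Or.inl ⟨e, by omega, h⟩
        · have : e = k+1 := by omega
          subst this; exact Or.inr h

lemma computable_bany {f : ℕ → ℕ → Bool} (hf : Computable₂ f) :
    Computable₂ (bany f) := by
  have hstep : Computable₂ fun (p : ℕ × ℕ) (q : ℕ × Bool) => q.2 || f p.1 (q.1+1) :=
    (Primrec.or.to_comp.comp (Computable.snd.comp Computable.snd)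
      (hf.comp (Computable.fst.comp Computable.fst)
        (Computable.succ.comp (Computable.fst.comp Computable.snd)))).to₂
  exact (Computable.nat_rec Computable.snd
    (hf.comp Computable.fst (Computable.const 0)) hstep).of_eq fun p => rfl

lemma re_of_exists_bool {f : ℕ → ℕ → Bool} (hf : Computable₂ f) :
    REPred fun a => ∃ e, f a e = true := by
  have h1 : Partrec fun a : ℕ => Nat.rfind fun n => Part.some (f a n) :=
    Partrec.rfind hf.partrec₂
  refine h1.dom_re.of_eq fun a => ?_
  refine (Nat.rfind_dom (p := fun n => Part.some (f a n))).trans ?_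
  constructor
  · rintro ⟨n, hn, -⟩
    exact ⟨n, (Part.mem_some_iff.1 hn).symm⟩
  · rintro ⟨e, he⟩
    exact ⟨e, Part.mem_some_iff.2 he.symm, fun {k} _ => trivial⟩

/-- Theorem 4 for κ = 2: suppose every system S ⊆ E_n with a unique solution
in ℕⁿ has its solution bounded coordinatewise by a computable function of n, and assume
Matiyasevich's single-fold transfer theorem (a single-fold representation of one function of
exponential growth yields single-fold representations of all r.e. predicates). Then no
function of exponential growth admits a single-fold Diophantine representation — unless every
recursively enumerable subset of ℕ is computable. -/
theorem stmt_8
    (hbound : ∃ B : ℕ → ℕ, Computable B ∧ ∀ n : ℕ, ∀ S : Set DEqn,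
      (∀ e ∈ S, DEqn.inE n e) → (∃! x : Fin n → ℕ, x ∈ SolSet n S) →
      ∀ x ∈ SolSet n S, ∀ i, x i ≤ B n)
    (htransfer : (∃ γ : ℕ → ℕ, ExpGrowth γ ∧ SingleFoldRepFun γ) →
      ∀ p : ℕ → Prop, REPred p → SingleFoldRepPred p) :
    (∃ γ : ℕ → ℕ, ExpGrowth γ ∧ SingleFoldRepFun γ) →
      ∀ p : ℕ → Prop, REPred p → ComputablePred p := by
  intro hγ p hre
  obtain ⟨m, W, hrep⟩ := htransfer hγ p hre
  obtain ⟨B, hBcomp, hB⟩ := hbound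
  obtain ⟨E1, E2, hE1, hE2, hdec'⟩ := poly_decomp m W
  have hdec : DecompOK m E1 E2 W := hdec'
  classical
  -- the solution predicate
  set sol : ℕ → (Fin m → ℕ) → Prop :=
    fun a x => MvPolynomial.eval (Fin.cons ((a : ℤ)) fun i : Fin m => (x i : ℤ)) W = 0
    with hsoldef
  -- bool test for a coded tuple being a solution
  set fB : ℕ → ℕ → Bool := fun a e =>
    XExpr.val (vbase m E1 E2 a (decTup m e)) E1 == XExpr.val (vbase m E1 E2 a (decTup m e)) E2
    with hfBdef
  have hfB : Computable₂ fB :=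
    Primrec.beq.to_comp.comp (computable_val (E1 := E1) (E2 := E2) E1 hE1)
      (computable_val (E1 := E1) (E2 := E2) E2 hE2)
  have fB_iff : ∀ a e, fB a e = true ↔ sol a (decTup m e) := by
    intro a e
    rw [hfBdef, hsoldef]
    simp only [beq_iff_eq]
    exact (decomp_zero_iff hdec a (decTup m e)).symm
  -- the bound on codes
  have hsysN : Computable fun a : ℕ => sysN m E1 E2 a := by
    have : Primrec fun a : ℕ => n0v m E1 E2 + a + 1 :=
      Primrec.succ.comp (Primrec.nat_add.comp (Primrec.const (n0v m E1 E2)) Primrec.id)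
    exact this.to_comp
  set KB : ℕ → ℕ := fun a => GB m (B (sysN m E1 E2 a)) with hKBdef
  have hKB : Computable KB := (computable_GB m).comp (hBcomp.comp hsysN)
  set DB : ℕ → Bool := fun a => bany fB a (KB a) with hDBdef
  have hDB : Computable DB := (computable_bany hfB).comp Computable.id hKB
  have DB_iff : ∀ a, DB a = true ↔ ∃ e ≤ KB a, sol a (decTup m e) := by
    intro a
    rw [hDBdef]
    simp only [bany_iff]
    exact exists_congr fun e => and_congr_right fun _ => fB_iff a e
  -- bool test for a coded pair of distinct solutions
  set Mat : ℕ → ℕ → Bool := fun a e =>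
    (!teq m e.unpair.1 e.unpair.2) && (fB a e.unpair.1 && fB a e.unpair.2) with hMatdef
  have hMat : Computable₂ Mat := by
    have c1 : Computable fun q : ℕ × ℕ => teq m q.2.unpair.1 q.2.unpair.2 :=
      (computable_teq m).comp
        (Computable.fst.comp (Computable.unpair.comp Computable.snd))
        (Computable.snd.comp (Computable.unpair.comp Computable.snd))
    have c2 : Computable fun q : ℕ × ℕ => fB q.1 q.2.unpair.1 :=
      hfB.comp Computable.fst (Computable.fst.comp (Computable.unpair.comp Computable.snd))
    have c3 : Computable fun q : ℕ × ℕ => fB q.1 q.2.unpair.2 :=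
      hfB.comp Computable.fst (Computable.snd.comp (Computable.unpair.comp Computable.snd))
    exact Primrec.and.to_comp.comp (Primrec.not.to_comp.comp c1)
      (Primrec.and.to_comp.comp c2 c3)
  have Mat_iff : ∀ a, (∃ e, Mat a e = true) ↔
      ∃ x y : Fin m → ℕ, x ≠ y ∧ sol a x ∧ sol a y := by
    intro a
    constructor
    · rintro ⟨e, he⟩
      rw [hMatdef] at he
      simp only [Bool.and_eq_true, Bool.not_eq_true'] at he
      obtain ⟨hne, h1, h2⟩ := he
      refine ⟨decTup m e.unpair.1, decTup m e.unpair.2, ?_, (fB_iff _ _).1 h1, (fB_iff _ _).1 h2⟩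
      intro hcontra
      rw [← teq_iff] at hcontra
      rw [hcontra] at hne
      simp at hne
    · rintro ⟨x, y, hne, hx, hy⟩
      refine ⟨Nat.pair (encTup m x) (encTup m y), ?_⟩
      rw [hMatdef]
      simp only [Bool.and_eq_true, Bool.not_eq_true', Nat.unpair_pair]
      refine ⟨?_, ?_, ?_⟩
      · rw [Bool.eq_false_iff]
        intro hcontra
        rw [teq_iff, decTup_encTup, decTup_encTup] at hcontra
        exact hne hcontra
      · rw [fB_iff, decTup_encTup]; exact hx
      · rw [fB_iff, decTup_encTup]; exact hy
  -- the combined semidecision matrix for ¬p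
  set F : ℕ → ℕ → Bool := fun a e => !DB a || Mat a e with hFdef
  have hF : Computable₂ F :=
    Primrec.or.to_comp.comp
      (Primrec.not.to_comp.comp (hDB.comp Computable.fst)) hMat
  -- p implies a bounded solution exists
  have hPD : ∀ a, p a → DB a = true := by
    intro a pa
    have huniq := (hrep a).1 pa
    obtain ⟨x, hx, -⟩ := huniq
    have hbd := key_bound hB hE1 hE2 hdec a ((hrep a).1 pa) x hx
    refine (DB_iff a).2 ⟨encTup m x, ?_, ?_⟩
    · exact encTup_le m x _ hbd
    · rw [decTup_encTup]; exact hx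
  -- main equivalence
  have keyiff : ∀ a, (∃ e, F a e = true) ↔ ¬ p a := by
    intro a
    constructor
    · rintro ⟨e, he⟩ pa
      rw [hFdef] at he
      simp only [Bool.or_eq_true, Bool.not_eq_true'] at he
      rcases he with hD | hM
      · rw [hPD a pa] at hD; simp at hD
      · obtain ⟨x, y, hne, hx, hy⟩ := (Mat_iff a).1 ⟨e, hM⟩
        have huniq := (hrep a).1 pa
        exact hne ((huniq.unique hx hy))
    · intro npa
      rcases hDBeq : DB a with _ | _
      · exact ⟨0, by rw [hFdef]; simp [hDBeq]⟩
      · obtain ⟨e0, -, hsol0⟩ := (DB_iff a).1 hDBeq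
        have hpair : ∃ x y : Fin m → ℕ, x ≠ y ∧ sol a x ∧ sol a y := by
          by_contra hnp
          push_neg at hnp
          apply npa
          refine (hrep a).2 ⟨decTup m e0, hsol0, fun y hy => ?_⟩
          by_contra hne
          exact (hnp y (decTup m e0) hne hy) hsol0
        obtain ⟨e, he⟩ := (Mat_iff a).2 hpair
        exact ⟨e, by rw [hFdef]; simp only [Bool.or_eq_true]; right; exact he⟩
  have hre_not : REPred fun a => ¬ p a := (re_of_exists_bool hF).of_eq keyiff
  exact ComputablePred.computable_iff_re_compl_re'.2 ⟨hre, hre_not⟩
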